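/- In intuitionistic linear logic, ¬¬(¬¬A ⊗ ¬¬B) is provably equivalent to ¬¬(A ⊗ B). -/

import Mathlib

/-- Formulas of first-order intuitionistic linear logic (de Bruijn indices,
terms are variables only). -/
inductive Fml : Type
  | atom : ℕ → List ℕ → Fml
  | one : Fml
  | zero : Fml
  | top : Fml
  | tens : Fml → Fml → Fml
  | amp : Fml → Fml → Fml
  | oplus : Fml → Fml → Fml
  | limp : Fml → Fml → Fml
  | bang : Fml → Fml
  | all : Fml → Fml
  | ex : Fml → Fml

namespace Fml

/-- Lift a renaming under a binder. -/
def liftF (f : ℕ → ℕ) : ℕ → ℕ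
  | 0 => 0
  | n + 1 => f n + 1

/-- Apply a renaming of variables to a formula. -/
def rename (f : ℕ → ℕ) : Fml → Fml
  | atom p l => atom p (l.map f)
  | one => one
  | zero => zero
  | top => top
  | tens A B => tens (A.rename f) (B.rename f)
  | amp A B => amp (A.rename f) (B.rename f)
  | oplus A B => oplus (A.rename f) (B.rename f)
  | limp A B => limp (A.rename f) (B.rename f)
  | bang A => bang (A.rename f)
  | all A => all (A.rename (liftF f))
  | ex A => ex (A.rename (liftF f))

/-- Shift all free variables up by one. -/
def shift (A : Fml) : Fml := A.rename Nat.succ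

/-- Substitute variable `t` for de Bruijn index 0. -/
def substV (t : ℕ) (A : Fml) : Fml :=
  A.rename (fun n => match n with | 0 => t | Nat.succ m => m)

/-- Linear negation `¬A := A ⊸ 0`. -/
def neg (A : Fml) : Fml := limp A zero

/-- `?A := ¬!¬A`. -/
def quest (A : Fml) : Fml := neg (bang (neg A))

end Fml

open Fml

/-- Sequent calculus for intuitionistic linear logic, extended by an
axiom schema `ax` (axioms of the form A ⊢ B). -/
inductive Deriv (ax : Fml → Fml → Prop) : List Fml → Fml → Prop
  | id (A) : Deriv ax [A] A
  | ofAx {A B : Fml} : ax A B → Deriv ax [A] B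
  | exch {Γ Δ : List Fml} {A : Fml} : Γ.Perm Δ → Deriv ax Γ A → Deriv ax Δ A
  | cut {Γ Δ : List Fml} {A C : Fml} : Deriv ax Γ A → Deriv ax (A :: Δ) C → Deriv ax (Γ ++ Δ) C
  | oneL {Γ : List Fml} {C : Fml} : Deriv ax Γ C → Deriv ax (one :: Γ) C
  | oneR : Deriv ax [] one
  | topR {Γ : List Fml} : Deriv ax Γ top
  | zeroL {Γ : List Fml} {C : Fml} : Deriv ax (zero :: Γ) C
  | tensR {Γ Δ : List Fml} {A B : Fml} : Deriv ax Γ A → Deriv ax Δ B → Deriv ax (Γ ++ Δ) (tens A B)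
  | tensL {Γ : List Fml} {A B C : Fml} : Deriv ax (A :: B :: Γ) C → Deriv ax (tens A B :: Γ) C
  | limpR {Γ : List Fml} {A B : Fml} : Deriv ax (A :: Γ) B → Deriv ax Γ (limp A B)
  | limpL {Γ Δ : List Fml} {A B C : Fml} : Deriv ax Γ A → Deriv ax (B :: Δ) C →
      Deriv ax (limp A B :: (Γ ++ Δ)) C
  | ampR {Γ : List Fml} {A B : Fml} : Deriv ax Γ A → Deriv ax Γ B → Deriv ax Γ (amp A B)
  | ampL₁ {Γ : List Fml} {A B C : Fml} : Deriv ax (A :: Γ) C → Deriv ax (amp A B :: Γ) C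
  | ampL₂ {Γ : List Fml} {A B C : Fml} : Deriv ax (B :: Γ) C → Deriv ax (amp A B :: Γ) C
  | oplusR₁ {Γ : List Fml} {A B : Fml} : Deriv ax Γ A → Deriv ax Γ (oplus A B)
  | oplusR₂ {Γ : List Fml} {A B : Fml} : Deriv ax Γ B → Deriv ax Γ (oplus A B)
  | oplusL {Γ : List Fml} {A B C : Fml} : Deriv ax (A :: Γ) C → Deriv ax (B :: Γ) C →
      Deriv ax (oplus A B :: Γ) C
  | allR {Γ : List Fml} {A : Fml} : Deriv ax (Γ.map shift) A → Deriv ax Γ (all A)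
  | allL {Γ : List Fml} {A C : Fml} (t : ℕ) : Deriv ax (substV t A :: Γ) C → Deriv ax (all A :: Γ) C
  | exR {Γ : List Fml} {A : Fml} (t : ℕ) : Deriv ax Γ (substV t A) → Deriv ax Γ (ex A)
  | exL {Γ : List Fml} {A C : Fml} : Deriv ax (A :: Γ.map shift) (shift C) → Deriv ax (ex A :: Γ) C
  | con {Γ : List Fml} {A C : Fml} : Deriv ax (bang A :: bang A :: Γ) C → Deriv ax (bang A :: Γ) C
  | wkn {Γ : List Fml} {A C : Fml} : Deriv ax Γ C → Deriv ax (bang A :: Γ) C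
  | bangR {Γ : List Fml} {A : Fml} : Deriv ax (Γ.map bang) A → Deriv ax (Γ.map bang) (bang A)
  | bangL {Γ : List Fml} {A C : Fml} : Deriv ax (A :: Γ) C → Deriv ax (bang A :: Γ) C

/-- No extra axioms: plain ILL. -/
def NoAx : Fml → Fml → Prop := fun _ _ => False

/-- The promotion axiom schema `A ⊢ !A`. -/
def PRO : Fml → Fml → Prop := fun A B => B = Fml.bang A

/-- The double-negation elimination schema `¬¬A ⊢ A`. -/
def DNE : Fml → Fml → Prop := fun A B => A = Fml.neg (Fml.neg B)

/-- Provable equivalence: both `A ⊢ B` and `B ⊢ A`. -/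
def EquivD (ax : Fml → Fml → Prop) (A B : Fml) : Prop :=
  Deriv ax [A] B ∧ Deriv ax [B] A


section Helpers
variable {ax : Fml → Fml → Prop}

/-- Rotate a 3-element list left by one. -/
lemma rot3 {α} (a b c : α) : ([a, b, c] : List α).Perm [b, c, a] :=
  (List.Perm.swap b a [c]).trans (List.Perm.cons b (List.Perm.swap c a []))

lemma negL {Γ : List Fml} {A C : Fml} (h : Deriv ax Γ A) :
    Deriv ax (Fml.neg A :: Γ) C := by
  have := Deriv.limpL (Δ := []) (C := C) h Deriv.zeroL
  simpa [Fml.neg] using this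

lemma dni (A : Fml) : Deriv ax [A] (Fml.neg (Fml.neg A)) :=
  Deriv.limpR (negL (Deriv.id A))

lemma monoNeg {X Y : Fml} (h : Deriv ax [X] Y) :
    Deriv ax [Fml.neg Y] (Fml.neg X) :=
  Deriv.limpR (Deriv.exch (List.Perm.swap X (Fml.neg Y) []) (negL h))

lemma tripleNeg (X : Fml) :
    Deriv ax [Fml.neg (Fml.neg (Fml.neg X))] (Fml.neg X) :=
  monoNeg (dni X)

end Helpers

theorem stmt3 (A B : Fml) :
    EquivD NoAx (Fml.neg (Fml.neg (Fml.tens (Fml.neg (Fml.neg A)) (Fml.neg (Fml.neg B)))))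
      (Fml.neg (Fml.neg (Fml.tens A B))) := by
  classical
  set N := Fml.neg
  -- key: ¬¬A, ¬¬B ⊢ ¬¬(A ⊗ B)
  have d2 : Deriv NoAx [N (Fml.tens A B), A, B] Fml.zero :=
    negL (Deriv.tensR (Deriv.id A) (Deriv.id B))
  have d3 : Deriv NoAx [N (Fml.tens A B), A] (N B) :=
    Deriv.limpR (Deriv.exch ((rot3 _ _ _).trans (rot3 _ _ _)) d2)
  have d4 : Deriv NoAx [N (N B), N (Fml.tens A B), A] Fml.zero := negL d3
  have d5 : Deriv NoAx [N (N B), N (Fml.tens A B)] (N A) :=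
    Deriv.limpR (Deriv.exch ((rot3 _ _ _).trans (rot3 _ _ _)) d4)
  have d6 : Deriv NoAx [N (N A), N (N B), N (Fml.tens A B)] Fml.zero := negL d5
  have key : Deriv NoAx [N (N A), N (N B)] (N (N (Fml.tens A B))) :=
    Deriv.limpR (Deriv.exch ((rot3 _ _ _).trans (rot3 _ _ _)) d6)
  have keyT : Deriv NoAx [Fml.tens (N (N A)) (N (N B))] (N (N (Fml.tens A B))) :=
    Deriv.tensL key
  constructor
  · -- hard direction
    have h1 := monoNeg (monoNeg keyT)
    have h2 := tripleNeg (ax := NoAx) (N (Fml.tens A B))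
    exact Deriv.cut (Δ := []) h1 h2
  · -- easy direction
    exact monoNeg (monoNeg (Deriv.tensL (Deriv.tensR (dni A) (dni B))))
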